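/- Let X be a nonempty bounded metric space. Then there exists a family (Z_x)_{x ∈ X} of metric spaces, each of cardinality equal to that of X when X is infinite, such that for all p, q ∈ X one has inf{dis R : R a correspondence between Z_p and Z_q} = 2·dist(p, q); that is, the map x ↦ Z_x is an isometric embedding of X into the Gromov–Hausdorff metric class (with d_GH(Z_p, Z_q) = dist(p, q) for all p, q ∈ X). -/

import Mathlib

open ENNReal

universe u

/-- A metric on a set `I`: symmetric, vanishing exactly on the diagonal, triangle inequality. -/
def IsMetric {I : Type*} (d : I → I → ℝ) : Prop :=
  (∀ x y, d x y = d y x) ∧ (∀ x y, d x y = 0 ↔ x = y) ∧ ∀ x y z, d x z ≤ d x y + d y z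

/-- A correspondence between `A` and `B`: a relation whose projections are surjective. -/
def IsCorr {A B : Type*} (R : Set (A × B)) : Prop :=
  (∀ a, ∃ b, (a, b) ∈ R) ∧ ∀ b, ∃ a, (a, b) ∈ R

/-- Distortion of a relation with respect to distance functions `dA` and `dB`. -/
noncomputable def disRel {A B : Type*} (dA : A → A → ℝ) (dB : B → B → ℝ)
    (σ : Set (A × B)) : ℝ≥0∞ :=
  ⨆ p ∈ σ, ⨆ q ∈ σ, ENNReal.ofReal |dA p.1 q.1 - dB p.2 q.2|

namespace GHEmb

attribute [local instance] Classical.propDecidable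

variable {α : Type u}

/-- Points of a label block: lists (tree nodes) plus two pendant markers. -/
abbrev TT (α : Type u) : Type u := List α ⊕ ULift Bool

/-- validity of a node list below root `a`. -/
def Valid (a : α) (l : List α) : Prop := List.Chain' WellOrderingRel (l ++ [a])

/-- tree adjacency (parent/child) among valid lists. -/
def Adj (a : α) (l m : List α) : Prop :=
  (∃ x, m = x :: l ∧ Valid a m) ∨ (∃ x, l = x :: m ∧ Valid a l)

lemma valid_nil (a : α) : Valid a [] := by simp [Valid, List.Chain', List.isChain_singleton]

lemma Valid.tail {a x : α} {l : List α} (h : Valid a (x :: l)) : Valid a l := by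
  have h' : List.Chain' WellOrderingRel (x :: (l ++ [a])) := by
    simpa [Valid, List.cons_append] using h
  exact h'.tail

lemma valid_single {a x : α} : Valid a [x] ↔ WellOrderingRel x a := by
  simp [Valid, List.Chain', List.isChain_cons_cons, List.isChain_singleton]

lemma valid_concat {a x : α} {l : List α} :
    Valid a (l ++ [x]) ↔ Valid x l ∧ WellOrderingRel x a := by
  unfold Valid
  simp only [List.Chain']; rw [List.isChain_append]
  simp only [List.getLast?_concat, List.isChain_singleton, List.head?_cons, Option.mem_def,
    Option.some.injEq, true_and]
  constructor
  · rintro ⟨h1, h2⟩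
    exact ⟨h1, h2 x rfl a rfl⟩
  · rintro ⟨h1, h2⟩
    exact ⟨h1, by rintro p rfl q rfl; exact h2⟩

lemma Adj.comm {a : α} {l m : List α} : Adj a l m ↔ Adj a m l := or_comm

lemma Adj.ne {a : α} {l m : List α} (h : Adj a l m) : l ≠ m := by
  rcases h with ⟨x, rfl, -⟩ | ⟨x, rfl, -⟩
  · exact fun h => List.cons_ne_self x l h.symm
  · exact List.cons_ne_self x m

/-- value of a node pair. -/
noncomputable def nodeVal (a : α) (l m : List α) : ℝ :=
  if Adj a l m then (if l = [] ∨ m = [] then 5/8 else 1/2) else 1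

/-- the label metric on a block. -/
noncomputable def dL (a : α) : TT α → TT α → ℝ
  | .inl l, .inl m => if l = m then 0 else nodeVal a l m
  | .inl l, .inr _ => if l = [] then 9/16 else 1
  | .inr _, .inl m => if m = [] then 9/16 else 1
  | .inr i, .inr j => if i = j then 0 else 1

lemma dL_self (a : α) (u : TT α) : dL a u u = 0 := by
  cases u <;> simp [dL]

lemma nodeVal_mem (a : α) (l m : List α) :
    nodeVal a l m = 5/8 ∨ nodeVal a l m = 1/2 ∨ nodeVal a l m = 1 := by
  unfold nodeVal; split_ifs <;> tauto

lemma dL_mem (a : α) (u v : TT α) :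
    dL a u v = 0 ∨ dL a u v = 1/2 ∨ dL a u v = 9/16 ∨ dL a u v = 5/8 ∨ dL a u v = 1 := by
  cases u with
  | inl l => cases v with
    | inl m =>
      simp only [dL]
      split_ifs
      · tauto
      · rcases nodeVal_mem a l m with h | h | h <;> rw [h] <;> tauto
    | inr j => simp only [dL]; split_ifs <;> tauto
  | inr i => cases v with
    | inl m => simp only [dL]; split_ifs <;> tauto
    | inr j => simp only [dL]; split_ifs <;> tauto

lemma dL_nonneg (a : α) (u v : TT α) : 0 ≤ dL a u v := by
  rcases dL_mem a u v with h | h | h | h | h <;> rw [h] <;> norm_num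

lemma dL_le_one (a : α) (u v : TT α) : dL a u v ≤ 1 := by
  rcases dL_mem a u v with h | h | h | h | h <;> rw [h] <;> norm_num

lemma dL_ne_zero {a : α} {u v : TT α} (h : u ≠ v) : dL a u v ≠ 0 := by
  cases u with
  | inl l => cases v with
    | inl m =>
      have hlm : l ≠ m := fun h' => h (by rw [h'])
      simp only [dL]
      rw [if_neg hlm]
      rcases nodeVal_mem a l m with h' | h' | h' <;> rw [h'] <;> norm_num
    | inr j => simp only [dL]; split_ifs <;> norm_num
  | inr i => cases v with
    | inl m => simp only [dL]; split_ifs <;> norm_num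
    | inr j =>
      have hij : i ≠ j := fun h' => h (by rw [h'])
      simp only [dL]
      rw [if_neg hij]
      norm_num

lemma half_le_dL {a : α} {u v : TT α} (h : u ≠ v) : 1/2 ≤ dL a u v := by
  have hne := dL_ne_zero (a := a) h
  rcases dL_mem a u v with h' | h' | h' | h' | h'
  · exact absurd h' hne
  all_goals rw [h']
  all_goals norm_num

lemma dL_symm (a : α) (u v : TT α) : dL a u v = dL a v u := by
  cases u with
  | inl l => cases v with
    | inl m =>
      simp only [dL]
      by_cases h : l = m
      · subst h; simp
      · rw [if_neg h, if_neg (Ne.symm h)]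
        unfold nodeVal
        by_cases hA : Adj a l m
        · rw [if_pos hA, if_pos (Adj.comm.mp hA)]
          by_cases h0 : l = [] ∨ m = []
          · rw [if_pos h0, if_pos h0.symm]
          · rw [if_neg h0, if_neg (fun h' => h0 h'.symm)]
        · rw [if_neg hA, if_neg (fun h' => hA (Adj.comm.mp h'))]
    | inr j => simp [dL]
  | inr i => cases v with
    | inl m => simp [dL]
    | inr j =>
      simp only [dL]
      by_cases h : i = j
      · subst h; simp
      · rw [if_neg h, if_neg (Ne.symm h)]

lemma dL_triangle (a : α) (u v w : TT α) : dL a u w ≤ dL a u v + dL a v w := by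
  by_cases huw : u = w
  · subst huw; rw [dL_self]; exact add_nonneg (dL_nonneg a u v) (dL_nonneg a v u)
  by_cases huv : u = v
  · subst huv; rw [dL_self]; simp
  by_cases hvw : v = w
  · subst hvw; rw [dL_self]; simp
  calc dL a u w ≤ 1 := dL_le_one a u w
  _ ≤ 1/2 + 1/2 := by norm_num
  _ ≤ dL a u v + dL a v w := add_le_add (half_le_dL huv) (half_le_dL hvw)


/-! ### Rigidity of label blocks -/

section Rigid

variable {a b : α} {f g : TT α → TT α}

lemma nine16_cases {u v : TT α} (h : dL b u v = 9/16) :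
    (u = Sum.inl [] ∧ ∃ i, v = Sum.inr i) ∨ (v = Sum.inl [] ∧ ∃ i, u = Sum.inr i) := by
  cases u with
  | inl l => cases v with
    | inl m =>
      exfalso
      simp only [dL] at h
      split_ifs at h
      · norm_num at h
      · rcases nodeVal_mem b l m with h' | h' | h' <;> rw [h'] at h <;> norm_num at h
    | inr j =>
      left
      simp only [dL] at h
      split_ifs at h with h0
      · exact ⟨by rw [h0], j, rfl⟩
      · norm_num at h
  | inr i => cases v with
    | inl m =>
      right
      simp only [dL] at h
      split_ifs at h with h0
      · exact ⟨by rw [h0], i, rfl⟩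
      · norm_num at h
    | inr j =>
      exfalso
      simp only [dL] at h
      split_ifs at h <;> norm_num at h

lemma half58_cases {u v : TT α} (h : dL b u v = 1/2 ∨ dL b u v = 5/8) :
    ∃ l m, u = Sum.inl l ∧ v = Sum.inl m ∧ Adj b l m := by
  cases u with
  | inl l => cases v with
    | inl m =>
      refine ⟨l, m, rfl, rfl, ?_⟩
      by_contra hA
      simp only [dL] at h
      split_ifs at h
      · rcases h with h | h <;> norm_num at h
      · unfold nodeVal at h
        rw [if_neg hA] at h
        rcases h with h | h <;> norm_num at h
    | inr j => exfalso; simp only [dL] at h; split_ifs at h <;> rcases h with h | h <;> norm_num at h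
  | inr i => cases v with
    | inl m => exfalso; simp only [dL] at h; split_ifs at h <;> rcases h with h | h <;> norm_num at h
    | inr j => exfalso; simp only [dL] at h; split_ifs at h <;> rcases h with h | h <;> norm_num at h

lemma adj_of_half58 {l m : List α} (h : dL b (Sum.inl l) (Sum.inl m) = 1/2 ∨ dL b (Sum.inl l) (Sum.inl m) = 5/8) :
    Adj b l m := by
  obtain ⟨l', m', hl, hm, hA⟩ := half58_cases h
  rw [Sum.inl.injEq] at hl hm
  rw [hl, hm]; exact hA

lemma dL_cons_val {x : α} {l : List α} (h : Valid a (x :: l)) :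
    dL a (Sum.inl l) (Sum.inl (x :: l)) = if l = [] then 5/8 else 1/2 := by
  have hne : l ≠ x :: l := fun h' => List.cons_ne_self x l h'.symm
  have hA : Adj a l (x :: l) := Or.inl ⟨x, rfl, h⟩
  simp only [dL, if_neg hne]
  unfold nodeVal
  rw [if_pos hA]
  by_cases h0 : l = []
  · rw [if_pos h0, if_pos (Or.inl h0)]
  · rw [if_neg h0, if_neg (by simp [h0])]

variable (hgf : ∀ u, g (f u) = u) (hfg : ∀ u, f (g u) = u)
  (hiso : ∀ u v, dL b (f u) (f v) = dL a u v)

include hgf hfg hiso in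
lemma root_fixed : f (Sum.inl ([] : List α)) = Sum.inl [] := by
  have h1 : dL b (f (Sum.inl [])) (f (Sum.inr ⟨true⟩)) = 9/16 := by
    rw [hiso]; simp [dL]
  have h2 : dL b (f (Sum.inl [])) (f (Sum.inr ⟨false⟩)) = 9/16 := by
    rw [hiso]; simp [dL]
  rcases nine16_cases h1 with ⟨h, -⟩ | ⟨-, i, hu⟩
  · exact h
  rcases nine16_cases h2 with ⟨h, -⟩ | ⟨hv2, -⟩
  · exact h
  -- f (inr true) = inl [] and f (inr false) = inl []
  rcases nine16_cases h1 with ⟨h, -⟩ | ⟨hv1, -⟩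
  · exact h
  exfalso
  have : (Sum.inr ⟨true⟩ : TT α) = Sum.inr ⟨false⟩ := by
    rw [← hgf (Sum.inr ⟨true⟩), ← hgf (Sum.inr ⟨false⟩), hv1, hv2]
  simp at this

include hgf hiso in
lemma structmap (hroot : f (Sum.inl []) = Sum.inl []) :
    ∀ n (l : List α), l.length = n → Valid a l →
      ∃ m, f (Sum.inl l) = Sum.inl m ∧ Valid b m ∧ m.length = n := by
  intro n
  induction n using Nat.strong_induction_on with
  | _ n IH =>
  intro l hlen hval
  have finj : ∀ u v, f u = f v → u = v := fun u v h => by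
    rw [← hgf u, ← hgf v, h]
  cases l with
  | nil =>
    refine ⟨[], hroot, valid_nil b, ?_⟩
    simpa using hlen
  | cons x l2 =>
    have hlen2 : l2.length < n := by simp at hlen; omega
    obtain ⟨m2, hfm2, hvm2, hlm2⟩ := IH l2.length hlen2 l2 rfl hval.tail
    have hv1 : dL b (Sum.inl m2) (f (Sum.inl (x :: l2))) = if l2 = [] then 5/8 else 1/2 := by
      rw [← hfm2, hiso]
      exact dL_cons_val hval
    have hmem : dL b (Sum.inl m2) (f (Sum.inl (x :: l2))) = 1/2 ∨
        dL b (Sum.inl m2) (f (Sum.inl (x :: l2))) = 5/8 := by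
      rw [hv1]; split_ifs <;> tauto
    obtain ⟨m2', m', hm2', hfx, hA⟩ := half58_cases hmem
    rw [Sum.inl.injEq] at hm2'
    subst hm2'
    rcases hA with ⟨y, rfl, hvym⟩ | ⟨y, hm2eq, -⟩
    · refine ⟨y :: m2, hfx, hvym, ?_⟩
      simp at hlen ⊢; omega
    · -- bad case: f (inl (x::l2)) is the parent of m2
      exfalso
      cases l2 with
      | nil => rw [hm2eq] at hlm2; simp at hlm2
      | cons x2 l3 =>
        have hlen3 : l3.length < n := by simp at hlen; omega
        obtain ⟨m3, hfm3, hvm3, hlm3⟩ := IH l3.length hlen3 l3 rfl hval.tail.tail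
        have hv2 : dL b (Sum.inl m3) (Sum.inl m2) = if l3 = [] then 5/8 else 1/2 := by
          rw [← hfm3, ← hfm2, hiso]
          exact dL_cons_val hval.tail
        have hA2 : Adj b m3 m2 := adj_of_half58 (by rw [hv2]; split_ifs <;> tauto)
        rcases hA2 with ⟨z, hm2z, -⟩ | ⟨z, hm3z, -⟩
        · -- m2 = z :: m3, and m2 = y :: m', so m' = m3
          have hm'm3 : m' = m3 := by
            rw [hm2z] at hm2eq
            injection hm2eq with h1 h2
            exact h2.symm
          have : (Sum.inl (x :: x2 :: l3) : TT α) = Sum.inl l3 := by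
            apply finj
            rw [hfx, hfm3, hm'm3]
          simp at this
          -- x :: x2 :: l3 = l3 is impossible by length
          have := congrArg List.length this
          simp at this
          omega
        · -- m3 = z :: m2 contradicts lengths
          rw [hm3z] at hlm3
          simp at hlm2 hlm3 hlen
          omega

include hgf hiso in
lemma consF (hroot : f (Sum.inl []) = Sum.inl []) {x : α} {l : List α} (h : Valid a (x :: l)) :
    ∃ y m, f (Sum.inl l) = Sum.inl m ∧ f (Sum.inl (x :: l)) = Sum.inl (y :: m) ∧
      Valid b (y :: m) := by
  obtain ⟨m, hfm, hvm, hlm⟩ := structmap hgf hiso hroot l.length l rfl h.tail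
  have hv1 : dL b (Sum.inl m) (f (Sum.inl (x :: l))) = if l = [] then 5/8 else 1/2 := by
    rw [← hfm, hiso]; exact dL_cons_val h
  have hmem : dL b (Sum.inl m) (f (Sum.inl (x :: l))) = 1/2 ∨
      dL b (Sum.inl m) (f (Sum.inl (x :: l))) = 5/8 := by
    rw [hv1]; split_ifs <;> tauto
  obtain ⟨m0, m', hm0, hfx, hA⟩ := half58_cases hmem
  rw [Sum.inl.injEq] at hm0
  subst hm0
  rcases hA with ⟨y, rfl, hv⟩ | ⟨y, hmeq, -⟩
  · exact ⟨y, m, hfm, hfx, hv⟩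
  · exfalso
    obtain ⟨m'', hfx', hvm'', hlm''⟩ := structmap hgf hiso hroot (x :: l).length (x :: l) rfl h
    rw [hfx] at hfx'
    rw [Sum.inl.injEq] at hfx'
    subst hfx'
    rw [hmeq] at hlm
    simp at hlm hlm''
    omega

end Rigid

/-- abstract coding relation between roots. -/
def Code (a b : α) : Prop := ∃ F G : List α → List α,
  (∀ l, Valid a l → Valid b (F l)) ∧ F [] = [] ∧
  (∀ x l, Valid a (x :: l) → ∃ y, F (x :: l) = y :: F l) ∧
  (∀ m, Valid b m → Valid a (G m)) ∧ G [] = [] ∧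
  (∀ y m, Valid b (y :: m) → ∃ x, G (y :: m) = x :: G m) ∧
  (∀ l, Valid a l → G (F l) = l) ∧ (∀ m, Valid b m → F (G m) = m)

lemma code_of_iso {a b : α} {f g : TT α → TT α}
    (hgf : ∀ u, g (f u) = u) (hfg : ∀ u, f (g u) = u)
    (hiso : ∀ u v, dL b (f u) (f v) = dL a u v) : Code a b := by
  have hiso' : ∀ u v, dL a (g u) (g v) = dL b u v := by
    intro u v
    conv_rhs => rw [← hfg u, ← hfg v]
    rw [hiso]
  have hroot : f (Sum.inl []) = Sum.inl [] := root_fixed hgf hfg hiso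
  have hroot' : g (Sum.inl []) = Sum.inl [] := by
    conv_lhs => rw [← hroot]
    exact hgf _
  classical
  set F : List α → List α := fun l => match f (Sum.inl l) with
    | .inl m => m | .inr _ => [] with hF
  set G : List α → List α := fun m => match g (Sum.inl m) with
    | .inl l => l | .inr _ => [] with hG
  have hFspec : ∀ l, Valid a l → f (Sum.inl l) = Sum.inl (F l) ∧ Valid b (F l) := by
    intro l hv
    obtain ⟨m, hm, hvm, -⟩ := structmap hgf hiso hroot l.length l rfl hv
    have : F l = m := by rw [hF]; simp only; rw [hm]
    rw [this]; exact ⟨hm, hvm⟩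
  have hGspec : ∀ m, Valid b m → g (Sum.inl m) = Sum.inl (G m) ∧ Valid a (G m) := by
    intro m hv
    obtain ⟨l, hl, hvl, -⟩ := structmap hfg hiso' hroot' m.length m rfl hv
    have : G m = l := by rw [hG]; simp only; rw [hl]
    rw [this]; exact ⟨hl, hvl⟩
  refine ⟨F, G, fun l hv => (hFspec l hv).2, ?_, ?_, fun m hv => (hGspec m hv).2, ?_, ?_, ?_, ?_⟩
  · rw [hF]; simp only; rw [hroot]
  · intro x l hv
    obtain ⟨y, m, hfl, hfxl, -⟩ := consF hgf hiso hroot hv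
    refine ⟨y, ?_⟩
    have h1 : F (x :: l) = y :: m := by rw [hF]; simp only; rw [hfxl]
    have h2 : F l = m := by rw [hF]; simp only; rw [hfl]
    rw [h1, h2]
  · rw [hG]; simp only; rw [hroot']
  · intro y m hv
    obtain ⟨x, l, hgl, hgxl, -⟩ := consF hfg hiso' hroot' hv
    refine ⟨x, ?_⟩
    have h1 : G (y :: m) = x :: l := by rw [hG]; simp only; rw [hgxl]
    have h2 : G m = l := by rw [hG]; simp only; rw [hgl]
    rw [h1, h2]
  · intro l hv
    have h1 := (hFspec l hv).1
    have h2 := (hGspec (F l) (hFspec l hv).2).1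
    have : g (f (Sum.inl l)) = Sum.inl (G (F l)) := by rw [h1, h2]
    rw [hgf] at this
    exact (Sum.inl.injEq .. ▸ this.symm : G (F l) = l)
  · intro m hv
    have h1 := (hGspec m hv).1
    have h2 := (hFspec (G m) (hGspec m hv).2).1
    have : f (g (Sum.inl m)) = Sum.inl (F (G m)) := by rw [h1, h2]
    rw [hfg] at this
    exact (Sum.inl.injEq .. ▸ this.symm : F (G m) = m)


section Sub

variable {a b x y : α} (F G : List α → List α)
  (hFv : ∀ l, Valid a l → Valid b (F l)) (hF0 : F [] = [])
  (hFc : ∀ x l, Valid a (x :: l) → ∃ y, F (x :: l) = y :: F l)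
  (hGv : ∀ m, Valid b m → Valid a (G m)) (hG0 : G [] = [])
  (hGc : ∀ y m, Valid b (y :: m) → ∃ x, G (y :: m) = x :: G m)
  (hGF : ∀ l, Valid a l → G (F l) = l) (hFG : ∀ m, Valid b m → F (G m) = m)

include hFv hF0 hFc in
lemma sub_key (hxa : WellOrderingRel x a) (hFx : F [x] = [y]) :
    ∀ l, Valid x l →
      F (l ++ [x]) = (F (l ++ [x])).dropLast ++ [y] ∧ Valid y ((F (l ++ [x])).dropLast) := by
  intro l
  induction l with
  | nil =>
    intro _
    simp only [List.nil_append, hFx]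
    constructor
    · simp
    · simp [valid_nil]
  | cons z l ih =>
    intro hv
    have hvl := Valid.tail hv
    obtain ⟨h1, h2⟩ := ih hvl
    have hva : Valid a ((z :: l) ++ [x]) := valid_concat.mpr ⟨hv, hxa⟩
    have hva' : Valid a (z :: (l ++ [x])) := by simpa using hva
    obtain ⟨w, hw⟩ := hFc z (l ++ [x]) hva'
    have hcalc : F ((z :: l) ++ [x]) = (w :: (F (l ++ [x])).dropLast) ++ [y] := by
      rw [List.cons_append, hw, h1]
      simp
    constructor
    · rw [hcalc, List.dropLast_concat]
    · rw [hcalc, List.dropLast_concat]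
      have hvb : Valid b (F ((z :: l) ++ [x])) := hFv _ hva
      rw [hcalc] at hvb
      exact (valid_concat.mp hvb).1

include hFv hF0 hFc hGv hG0 hGc hGF hFG in
lemma sub_build (hxa : WellOrderingRel x a) (hFx : F [x] = [y]) : Code x y := by
  have hyb : WellOrderingRel y b := by
    have := hFv [x] (valid_single.mpr hxa)
    rw [hFx] at this
    exact valid_single.mp this
  have hGy : G [y] = [x] := by
    have := hGF [x] (valid_single.mpr hxa)
    rw [hFx] at this
    exact this
  have keyF := sub_key F hFv hF0 hFc hxa hFx
  have keyG := sub_key G hGv hG0 hGc hyb hGy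
  refine ⟨fun l => (F (l ++ [x])).dropLast, fun m => (G (m ++ [y])).dropLast,
    fun l hv => (keyF l hv).2, ?_, ?_, fun m hv => (keyG m hv).2, ?_, ?_, ?_, ?_⟩
  · simp [hFx]
  · -- cons property for F'
    intro z l hv
    have hvl := Valid.tail hv
    have hva : Valid a (z :: (l ++ [x])) := by
      simpa using valid_concat.mpr ⟨hv, hxa⟩
    obtain ⟨w, hw⟩ := hFc z (l ++ [x]) hva
    refine ⟨w, ?_⟩
    have h1 := (keyF l hvl).1
    have hne : F (l ++ [x]) ≠ [] := by rw [h1]; simp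
    calc (F ((z :: l) ++ [x])).dropLast
        = (F (z :: (l ++ [x]))).dropLast := by rw [List.cons_append]
      _ = (w :: F (l ++ [x])).dropLast := by rw [hw]
      _ = w :: (F (l ++ [x])).dropLast := List.dropLast_cons_of_ne_nil hne
  · simp [hGy]
  · intro w m hv
    have hvm := Valid.tail hv
    have hvb : Valid b (w :: (m ++ [y])) := by
      simpa using valid_concat.mpr ⟨hv, hyb⟩
    obtain ⟨u, hu⟩ := hGc w (m ++ [y]) hvb
    refine ⟨u, ?_⟩
    have h1 := (keyG m hvm).1
    have hne : G (m ++ [y]) ≠ [] := by rw [h1]; simp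
    calc (G ((w :: m) ++ [y])).dropLast
        = (G (w :: (m ++ [y]))).dropLast := by rw [List.cons_append]
      _ = (u :: G (m ++ [y])).dropLast := by rw [hu]
      _ = u :: (G (m ++ [y])).dropLast := List.dropLast_cons_of_ne_nil hne
  · intro l hv
    have h1 := (keyF l hv).1
    have hva : Valid a (l ++ [x]) := valid_concat.mpr ⟨hv, hxa⟩
    have h2 : G ((F (l ++ [x])).dropLast ++ [y]) = l ++ [x] := by
      rw [← h1, hGF _ hva]
    show (G ((F (l ++ [x])).dropLast ++ [y])).dropLast = l
    rw [h2, List.dropLast_concat]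
  · intro m hv
    have h1 := (keyG m hv).1
    have hvb : Valid b (m ++ [y]) := valid_concat.mpr ⟨hv, hyb⟩
    have h2 : F ((G (m ++ [y])).dropLast ++ [x]) = m ++ [y] := by
      rw [← h1, hFG _ hvb]
    show (F ((G (m ++ [y])).dropLast ++ [x])).dropLast = m
    rw [h2, List.dropLast_concat]

end Sub

lemma code_rigid : ∀ a b : α, Code a b → a = b := by
  intro a
  induction a using IsWellFounded.induction (r := (WellOrderingRel : α → α → Prop)) with
  | ind a IH =>
  intro b hab
  obtain ⟨F, G, hFv, hF0, hFc, hGv, hG0, hGc, hGF, hFG⟩ := hab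
  have hpred1 : ∀ x, WellOrderingRel x a → WellOrderingRel x b := by
    intro x hx
    obtain ⟨y, hy⟩ := hFc x [] (valid_single.mpr hx)
    rw [hF0] at hy
    have hyb : WellOrderingRel y b := by
      have := hFv [x] (valid_single.mpr hx)
      rw [hy] at this
      exact valid_single.mp this
    have hcode : Code x y := sub_build F G hFv hF0 hFc hGv hG0 hGc hGF hFG hx hy
    rw [IH x hx y hcode]
    exact hyb
  have hpred2 : ∀ y, WellOrderingRel y b → WellOrderingRel y a := by
    intro y hy
    obtain ⟨z, hz⟩ := hGc y [] (valid_single.mpr hy)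
    rw [hG0] at hz
    have hza : WellOrderingRel z a := by
      have := hGv [y] (valid_single.mpr hy)
      rw [hz] at this
      exact valid_single.mp this
    have hFz : F [z] = [y] := by
      have := hFG [y] (valid_single.mpr hy)
      rw [hz] at this
      exact this
    have hcode : Code z y := sub_build F G hFv hF0 hFc hGv hG0 hGc hGF hFG hza hFz
    rw [← IH z hza y hcode]
    exact hza
  rcases trichotomous (r := (WellOrderingRel : α → α → Prop)) a b with h | h | h
  · exact absurd (hpred2 a h) (irrefl a)
  · exact h
  · exact absurd (hpred1 b h) (irrefl b)

lemma tree_rigid {a b : α} {f g : TT α → TT α}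
    (hgf : ∀ u, g (f u) = u) (hfg : ∀ u, f (g u) = u)
    (hiso : ∀ u v, dL b (f u) (f v) = dL a u v) : a = b :=
  code_rigid a b (code_of_iso hgf hfg hiso)


/-! ### The spaces `Z_x` -/

section Metric

variable {X : Type u} [MetricSpace X]

/-- underlying type of all the spaces `Z_x`. -/
abbrev ZT (X : Type u) : Type u := X × TT X

/-- the metric of `Z_x` (`D` is a bound for the diameter of `X`). -/
noncomputable def dZ (D : ℝ) (x : X) (z w : ZT X) : ℝ :=
  if z.1 = w.1 then (64*D + 2*dist z.1 x) * dL z.1 z.2 w.2 else 68*D + dist z.1 w.1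

lemma dZ_same (D : ℝ) (x a : X) (u v : TT X) :
    dZ D x (a, u) (a, v) = (64*D + 2*dist a x) * dL a u v := by simp [dZ]

lemma dZ_diff (D : ℝ) (x : X) {a b : X} (u v : TT X) (h : a ≠ b) :
    dZ D x (a, u) (b, v) = 68*D + dist a b := by simp [dZ, h]

lemma dZ_self (D : ℝ) (x : X) (z : ZT X) : dZ D x z z = 0 := by
  obtain ⟨a, u⟩ := z; simp [dZ, dL_self]

variable {D : ℝ} (hD1 : 1 ≤ D) (hdist : ∀ a b : X, dist a b ≤ D)

include hD1 in
lemma scale_lb (x a : X) : 64*D ≤ 64*D + 2*dist a x := by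
  have := dist_nonneg (x := a) (y := x); linarith

include hD1 hdist in
lemma scale_ub (x a : X) : 64*D + 2*dist a x ≤ 66*D := by
  have := hdist a x; linarith

include hD1 in
lemma dZ_nonneg (x : X) (z w : ZT X) : 0 ≤ dZ D x z w := by
  obtain ⟨a, u⟩ := z; obtain ⟨b, v⟩ := w
  by_cases h : a = b
  · subst h; rw [dZ_same]
    have h1 : (0:ℝ) ≤ 64*D + 2*dist a x := le_trans (by linarith) (scale_lb hD1 x a)
    exact mul_nonneg h1 (dL_nonneg a u v)
  · rw [dZ_diff _ _ _ _ h]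
    have := dist_nonneg (x := a) (y := b); linarith

include hD1 hdist in
lemma dZ_within_le (x a : X) (u v : TT X) : dZ D x (a, u) (a, v) ≤ 66*D := by
  rw [dZ_same]
  calc (64*D + 2*dist a x) * dL a u v ≤ (66*D) * 1 := by
        apply mul_le_mul (scale_ub hD1 hdist x a) (dL_le_one a u v) (dL_nonneg a u v)
        linarith
    _ = 66*D := mul_one _

include hD1 in
lemma dZ_sep (x : X) {z w : ZT X} (h : z ≠ w) : 32*D ≤ dZ D x z w := by
  obtain ⟨a, u⟩ := z; obtain ⟨b, v⟩ := w
  by_cases hab : a = b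
  · subst hab
    have huv : u ≠ v := fun h' => h (by rw [h'])
    rw [dZ_same]
    calc (32:ℝ)*D = (64*D) * (1/2) := by ring
      _ ≤ (64*D + 2*dist a x) * dL a u v := by
          apply mul_le_mul (scale_lb hD1 x a) (half_le_dL huv) (by norm_num)
          linarith [dist_nonneg (x := a) (y := x)]
  · rw [dZ_diff _ _ _ _ hab]
    have := dist_nonneg (x := a) (y := b); linarith

include hD1 in
lemma block_of_lt (x : X) {z w : ZT X} (h : dZ D x z w < 68*D) : z.1 = w.1 := by
  by_contra hne
  obtain ⟨a, u⟩ := z; obtain ⟨b, v⟩ := w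
  rw [dZ_diff _ _ _ _ hne] at h
  have := dist_nonneg (x := a) (y := b)
  simp only at h
  linarith

include hD1 hdist in
lemma isMetric_dZ (x : X) : IsMetric (dZ D x) := by
  refine ⟨?_, ?_, ?_⟩
  · rintro ⟨a, u⟩ ⟨b, v⟩
    by_cases h : a = b
    · subst h; rw [dZ_same, dZ_same, dL_symm]
    · rw [dZ_diff _ _ _ _ h, dZ_diff _ _ _ _ (Ne.symm h), dist_comm]
  · rintro ⟨a, u⟩ ⟨b, v⟩
    by_cases h : a = b
    · subst h
      rw [dZ_same]
      have hsc : (0:ℝ) < 64*D + 2*dist a x := by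
        have := dist_nonneg (x := a) (y := x); linarith
      constructor
      · intro h0
        rcases mul_eq_zero.mp h0 with h1 | h1
        · exact absurd h1 (ne_of_gt hsc)
        · by_contra hne
          have huv : u ≠ v := fun h' => hne (by rw [h'])
          exact dL_ne_zero huv h1
      · intro h0
        have : u = v := by injection h0 with h1 h2
        rw [this, dL_self, mul_zero]
    · rw [dZ_diff _ _ _ _ h]
      constructor
      · intro h0
        exfalso
        have := dist_nonneg (x := a) (y := b)
        linarith
      · intro h0
        injection h0 with h1 h2
        exact absurd h1 h
  · rintro ⟨a, u⟩ ⟨b, v⟩ ⟨c, w⟩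
    by_cases hab : a = b <;> by_cases hbc : b = c
    · subst hab; subst hbc
      rw [dZ_same, dZ_same, dZ_same, ← mul_add]
      have hsc : (0:ℝ) ≤ 64*D + 2*dist a x := by
        have := dist_nonneg (x := a) (y := x); linarith
      exact mul_le_mul_of_nonneg_left (dL_triangle a u v w) hsc
    · subst hab
      have hac : a ≠ c := hbc
      rw [dZ_diff _ _ _ _ hac, dZ_diff _ _ _ _ hbc, dZ_same]
      have h1 : (0:ℝ) ≤ (64*D + 2*dist a x) * dL a u v := by
        apply mul_nonneg _ (dL_nonneg a u v)
        have := dist_nonneg (x := a) (y := x); linarith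
      linarith
    · subst hbc
      have hac : a ≠ b := hab
      rw [dZ_diff _ _ _ _ hac, dZ_diff _ _ _ _ hab, dZ_same]
      have h1 : (0:ℝ) ≤ (64*D + 2*dist b x) * dL b v w := by
        apply mul_nonneg _ (dL_nonneg b v w)
        have := dist_nonneg (x := b) (y := x); linarith
      linarith
    · by_cases hac : a = c
      · subst hac
        rw [dZ_same, dZ_diff _ _ _ _ hab, dZ_diff _ _ _ _ hbc]
        have h1 : dZ D x (a, u) (a, w) ≤ 66*D := dZ_within_le hD1 hdist x a u w
        rw [dZ_same] at h1
        have h2 := dist_nonneg (x := a) (y := b)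
        have h3 := dist_nonneg (x := b) (y := a)
        linarith
      · rw [dZ_diff _ _ _ _ hac, dZ_diff _ _ _ _ hab, dZ_diff _ _ _ _ hbc]
        have := dist_triangle a b c
        linarith

end Metric


/-! ### distortion bounds -/

section Main

variable {X : Type u} [MetricSpace X] {D : ℝ}

lemma val_cancel {s t v w e D : ℝ} (hD1 : 1 ≤ D)
    (hs : 64*D ≤ s) (hs' : s ≤ 66*D) (ht : 64*D ≤ t) (ht' : t ≤ 66*D)
    (hv : v = 0 ∨ v = 1/2 ∨ v = 9/16 ∨ v = 5/8 ∨ v = 1)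
    (hw : w = 0 ∨ w = 1/2 ∨ w = 9/16 ∨ w = 5/8 ∨ w = 1)
    (habs : |s*v - t*w| ≤ e) (he : e < 2*D) : v = w := by
  obtain ⟨h1, h2⟩ := abs_le.mp habs
  rcases hv with rfl | rfl | rfl | rfl | rfl <;>
    rcases hw with rfl | rfl | rfl | rfl | rfl <;>
    first
      | rfl
      | (exfalso; linarith)

variable (hD1 : 1 ≤ D) (hdist : ∀ a b : X, dist a b ≤ D)

include hD1 hdist in
lemma pointwise_bound (p q : X) (z w : ZT X) :
    |dZ D p z w - dZ D q z w| ≤ 2 * dist p q := by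
  obtain ⟨a, u⟩ := z; obtain ⟨b, v⟩ := w
  by_cases h : a = b
  · subst h
    rw [dZ_same, dZ_same, ← sub_mul]
    have h1 : (64*D + 2*dist a p) - (64*D + 2*dist a q) = 2*(dist a p - dist a q) := by ring
    rw [h1, abs_mul]
    have h2 : |2*(dist a p - dist a q)| ≤ 2 * dist p q := by
      have h3 := abs_dist_sub_le p q a
      rw [dist_comm p a, dist_comm q a] at h3
      rw [abs_mul, abs_of_nonneg (by norm_num : (0:ℝ) ≤ 2)]
      linarith [abs_nonneg (dist a p - dist a q)]
    calc |2*(dist a p - dist a q)| * |dL a u v| ≤ (2 * dist p q) * 1 := by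
          apply mul_le_mul h2 _ (abs_nonneg _) (by positivity)
          rw [abs_of_nonneg (dL_nonneg a u v)]
          exact dL_le_one a u v
      _ = 2 * dist p q := mul_one _
  · rw [dZ_diff _ _ _ _ h, dZ_diff _ _ _ _ h, sub_self, abs_zero]
    positivity


include hD1 hdist in
lemma lower_bound (p q : X) (R : Set (ZT X × ZT X)) (hR : IsCorr R) :
    ENNReal.ofReal (2 * dist p q) ≤ disRel (dZ D p) (dZ D q) R := by
  by_contra hcon
  rw [not_le] at hcon
  set dis := disRel (dZ D p) (dZ D q) R with hdis
  have hfin : dis ≠ ⊤ := ne_top_of_lt hcon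
  set e := dis.toReal with he_def
  have he0 : 0 ≤ e := ENNReal.toReal_nonneg
  have hd : e < 2 * dist p q := by
    have := (ENNReal.toReal_lt_toReal hfin (ENNReal.ofReal_ne_top : (ENNReal.ofReal (2*dist p q)) ≠ ⊤)).mpr hcon
    rwa [ENNReal.toReal_ofReal (by positivity)] at this
  have he2D : e < 2*D := lt_of_lt_of_le hd (by have := hdist p q; linarith)
  have hpair : ∀ z z' w w', (z, z') ∈ R → (w, w') ∈ R →
      |dZ D p z w - dZ D q z' w'| ≤ e := by
    intro z z' w w' h1 h2
    have hle : ENNReal.ofReal |dZ D p z w - dZ D q z' w'| ≤ dis := by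
      rw [hdis]
      exact le_iSup₂_of_le (z, z') h1 (le_iSup₂_of_le (w, w') h2 le_rfl)
    have := ENNReal.toReal_mono hfin hle
    rwa [ENNReal.toReal_ofReal (abs_nonneg _)] at this
  obtain ⟨hR1, hR2⟩ := hR
  choose φ hφ using hR1
  choose ψ hψ using hR2
  have uniqR : ∀ z w w', (z, w) ∈ R → (z, w') ∈ R → w = w' := by
    intro z w w' h1 h2
    by_contra hne
    have h3 := hpair z w z w' h1 h2
    rw [dZ_self, zero_sub, abs_neg, abs_of_nonneg (dZ_nonneg hD1 q w w')] at h3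
    have := dZ_sep hD1 q hne
    linarith
  have uniqL : ∀ z z' w, (z, w) ∈ R → (z', w) ∈ R → z = z' := by
    intro z z' w h1 h2
    by_contra hne
    have h3 := hpair z w z' w h1 h2
    rw [dZ_self, sub_zero, abs_of_nonneg (dZ_nonneg hD1 p z z')] at h3
    have := dZ_sep hD1 p hne
    linarith
  have hψφ : ∀ z, ψ (φ z) = z := fun z => uniqL _ _ _ (hψ (φ z)) (hφ z)
  have hφψ : ∀ w, φ (ψ w) = w := fun w => uniqR _ _ _ (hφ (ψ w)) (hψ w)
  set b := (φ (p, Sum.inl [])).1 with hb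
  have hfwd : ∀ u : TT X, (φ (p, u)).1 = b := by
    intro u
    have h1 := hpair (p, u) (φ (p, u)) (p, Sum.inl []) (φ (p, Sum.inl [])) (hφ _) (hφ _)
    have h2 : dZ D p (p, u) (p, Sum.inl []) ≤ 66*D := dZ_within_le hD1 hdist p p u _
    have h3 : dZ D q (φ (p, u)) (φ (p, Sum.inl [])) < 68*D := by
      rcases abs_le.mp h1 with ⟨ha, hb'⟩
      linarith
    exact block_of_lt hD1 q h3
  set φ' : TT X → TT X := fun u => (φ (p, u)).2 with hφ'
  have hφu : ∀ u, φ (p, u) = (b, φ' u) := fun u => Prod.ext (hfwd u) rfl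
  have hbwd : ∀ u : TT X, (ψ (b, u)).1 = p := by
    intro u
    have h1 := hpair (ψ (b, u)) (b, u) (ψ (φ (p, Sum.inl []))) (φ (p, Sum.inl []))
      (hψ _) (hψ _)
    rw [hψφ] at h1
    have h2 : dZ D q (b, u) (φ (p, Sum.inl [])) ≤ 66*D := by
      rw [hφu]
      exact dZ_within_le hD1 hdist q b u _
    have h3 : dZ D p (ψ (b, u)) (p, Sum.inl []) < 68*D := by
      rcases abs_le.mp h1 with ⟨ha, hb'⟩
      linarith
    exact block_of_lt hD1 p h3
  set ψ' : TT X → TT X := fun u => (ψ (b, u)).2 with hψ'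
  have hψu : ∀ u, ψ (b, u) = (p, ψ' u) := fun u => Prod.ext (hbwd u) rfl
  have hgf : ∀ u, ψ' (φ' u) = u := by
    intro u
    have h : ψ (b, φ' u) = (p, u) := by rw [← hφu, hψφ]
    calc ψ' (φ' u) = (ψ (b, φ' u)).2 := rfl
      _ = u := by rw [h]
  have hfg : ∀ u, φ' (ψ' u) = u := by
    intro u
    have h : φ (p, ψ' u) = (b, u) := by rw [← hψu, hφψ]
    calc φ' (ψ' u) = (φ (p, ψ' u)).2 := rfl
      _ = u := by rw [h]
  have hisoL : ∀ u v, dL b (φ' u) (φ' v) = dL p u v := by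
    intro u v
    have h1 := hpair (p, u) (φ (p, u)) (p, v) (φ (p, v)) (hφ _) (hφ _)
    rw [hφu u, hφu v, dZ_same, dZ_same] at h1
    exact (val_cancel hD1 (scale_lb hD1 p p) (scale_ub hD1 hdist p p)
      (scale_lb hD1 q b) (scale_ub hD1 hdist q b) (dL_mem p u v) (dL_mem b _ _) h1 he2D).symm
  have hbp : b = p := (tree_rigid hgf hfg hisoL).symm
  rw [hbp] at hψu
  have h1 := hpair (ψ (p, Sum.inr ⟨true⟩)) (p, Sum.inr ⟨true⟩)
    (ψ (p, Sum.inr ⟨false⟩)) (p, Sum.inr ⟨false⟩) (hψ _) (hψ _)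
  have h2 : dZ D q (p, (Sum.inr ⟨true⟩ : TT X)) (p, Sum.inr ⟨false⟩) = 64*D + 2*dist p q := by
    rw [dZ_same]
    have : dL p (Sum.inr ⟨true⟩ : TT X) (Sum.inr ⟨false⟩) = 1 := by
      simp [dL]
    rw [this, mul_one]
  have h3 : dZ D p (ψ (p, Sum.inr ⟨true⟩)) (ψ (p, Sum.inr ⟨false⟩)) ≤ 64*D := by
    rw [hψu, hψu, dZ_same, dist_self]
    have hrw : (64*D + 2*(0:ℝ)) = 64*D := by ring
    rw [hrw]
    calc 64*D * dL p (ψ' (Sum.inr ⟨true⟩)) (ψ' (Sum.inr ⟨false⟩)) ≤ 64*D * 1 :=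
          mul_le_mul_of_nonneg_left (dL_le_one _ _ _) (by linarith)
      _ = 64*D := mul_one _
  have h4 : 0 ≤ dZ D p (ψ (p, Sum.inr ⟨true⟩)) (ψ (p, Sum.inr ⟨false⟩)) :=
    dZ_nonneg hD1 p _ _
  rcases abs_le.mp h1 with ⟨ha, hb'⟩
  rw [h2] at ha
  linarith

include hD1 hdist in
lemma upper_bound (p q : X) :
    disRel (dZ D p) (dZ D q) {zw : ZT X × ZT X | zw.1 = zw.2} ≤
      ENNReal.ofReal (2 * dist p q) := by
  apply iSup₂_le
  intro z hz
  apply iSup₂_le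
  intro w hw
  have hz' : z.1 = z.2 := hz
  have hw' : w.1 = w.2 := hw
  rw [← hz', ← hw']
  exact ENNReal.ofReal_le_ofReal (pointwise_bound hD1 hdist p q z.1 w.1)

end Main

end GHEmb

open GHEmb

/-- Every nonempty bounded metric space `X` embeds isometrically into the Gromov–Hausdorff
class: there is a family `(Z_x)_{x ∈ X}` of metric spaces (of cardinality equal to that of
`X` when `X` is infinite) with `2 d_GH(Z_p, Z_q) = inf{dis R : R correspondence} =
2 dist(p,q)` for all `p, q ∈ X`. -/
theorem stmt_11 {X : Type u} [MetricSpace X] [Nonempty X]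
    (hbdd : Bornology.IsBounded (Set.univ : Set X)) :
    ∃ (Z : X → Type u) (dZ : (x : X) → Z x → Z x → ℝ),
      (∀ x, IsMetric (dZ x)) ∧
      (Infinite X → ∀ x, Cardinal.mk (Z x) = Cardinal.mk X) ∧
      ∀ p q : X,
        (⨅ R ∈ {R : Set (Z p × Z q) | IsCorr R}, disRel (dZ p) (dZ q) R) =
          ENNReal.ofReal (2 * dist p q) := by
  obtain ⟨D0, hD0⟩ := Metric.isBounded_iff.mp hbdd
  set D : ℝ := max D0 1 with hD
  have hD1 : (1:ℝ) ≤ D := le_max_right _ _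
  have hdist : ∀ a b : X, dist a b ≤ D := fun a b =>
    le_trans (hD0 (Set.mem_univ a) (Set.mem_univ b)) (le_max_left _ _)
  refine ⟨fun _ => ZT X, fun x => dZ D x, fun x => isMetric_dZ hD1 hdist x, ?_, ?_⟩
  · intro hX x
    haveI := hX
    have h1 : Cardinal.mk (List X) = Cardinal.mk X := Cardinal.mk_list_eq_mk X
    have h2 : Cardinal.mk (TT X) = Cardinal.mk X := by
      have : Cardinal.mk (TT X) = Cardinal.mk (List X) + Cardinal.mk (ULift.{u} Bool) := by
        simpa [TT] using Cardinal.mk_sum (List X) (ULift.{u} Bool)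
      rw [this, h1]
      have hb : Cardinal.mk (ULift.{u} Bool) ≤ Cardinal.mk X := by
        have : Cardinal.mk (ULift.{u} Bool) = 2 := by simp
        rw [this]
        exact le_trans (by exact_mod_cast (Cardinal.nat_lt_aleph0 2).le) (Cardinal.aleph0_le_mk X)
      exact Cardinal.add_eq_left (Cardinal.aleph0_le_mk X) hb
    calc Cardinal.mk (ZT X) = Cardinal.mk X * Cardinal.mk (TT X) := by
          simpa [ZT] using Cardinal.mk_prod X (TT X)
      _ = Cardinal.mk X * Cardinal.mk X := by rw [h2]
      _ = Cardinal.mk X := Cardinal.mul_eq_self (Cardinal.aleph0_le_mk X)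
  · intro p q
    have hcorr : IsCorr {zw : ZT X × ZT X | zw.1 = zw.2} := by
      constructor
      · intro a
        exact ⟨a, by simp [Set.mem_setOf_eq]⟩
      · intro b
        exact ⟨b, by simp [Set.mem_setOf_eq]⟩
    apply le_antisymm
    · exact iInf₂_le_of_le {zw : ZT X × ZT X | zw.1 = zw.2} hcorr
        (upper_bound hD1 hdist p q)
    · exact le_iInf₂ fun R hR => lower_bound hD1 hdist p q R hR
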